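/- Let α, ρ : ℝ → ℝ be C¹ functions and β, σ : ℝ → ℝ be continuous. Define b(u) = ∫₀ᵘ β(k)dk and s(v) = ∫₀ᵛ σ(k)dk, and set ω(u,v) = (1 − b(u)s(v)) α(u) ρ(v), A(u) = α(u)² β(u), B(v) = ρ(v)² σ(v). Then ω(u,v) · ∂_u∂_v ω(u,v) − (∂_u ω(u,v))(∂_v ω(u,v)) + A(u) B(v) = 0 for all (u,v) ∈ ℝ²; equivalently, ∂_u∂_v log ω + A B ω⁻² = 0 wherever ω > 0. -/

import Mathlib

/-- The data `ω = (1 − b(u)s(v)) α(u) ρ(v)`, `A = α²β`, `B = ρ²σ` solves the Liouville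
equation `ω ∂_u∂_vω − ∂_uω ∂_vω + AB = 0` (equivalently `∂_u∂_v log ω + ABω⁻² = 0`
wherever `ω > 0`). -/
theorem stmt4 (α ρ : ℝ → ℝ) (hα : ContDiff ℝ 1 α) (hρ : ContDiff ℝ 1 ρ)
    (β σ : ℝ → ℝ) (hβ : Continuous β) (hσ : Continuous σ)
    (b s : ℝ → ℝ)
    (hb : ∀ u, b u = ∫ k in (0:ℝ)..u, β k)
    (hs : ∀ v, s v = ∫ k in (0:ℝ)..v, σ k)
    (ω : ℝ → ℝ → ℝ) (A B : ℝ → ℝ)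
    (hω : ∀ u v, ω u v = (1 - b u * s v) * α u * ρ v)
    (hA : ∀ u, A u = α u ^ 2 * β u) (hB : ∀ v, B v = ρ v ^ 2 * σ v) :
    (∀ u v : ℝ,
      ω u v * deriv (fun u' => deriv (fun v' => ω u' v') v) u
        - deriv (fun u' => ω u' v) u * deriv (fun v' => ω u v') v
        + A u * B v = 0) ∧
    (∀ u v : ℝ, 0 < ω u v →
      deriv (fun u' => deriv (fun v' => Real.log (ω u' v')) v) u
        + A u * B v / (ω u v) ^ 2 = 0) := by
  have hαd : ∀ u, HasDerivAt α (deriv α u) u := fun u =>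
    (hα.differentiable one_ne_zero u).hasDerivAt
  have hρd : ∀ v, HasDerivAt ρ (deriv ρ v) v := fun v =>
    (hρ.differentiable one_ne_zero v).hasDerivAt
  have hbd : ∀ u, HasDerivAt b (β u) u := by
    intro u
    have hbe : b = fun u => ∫ k in (0:ℝ)..u, β k := funext hb
    rw [hbe]
    exact intervalIntegral.integral_hasDerivAt_right (hβ.intervalIntegrable 0 u)
      (hβ.stronglyMeasurableAtFilter _ _) hβ.continuousAt
  have hsd : ∀ v, HasDerivAt s (σ v) v := by
    intro v
    have hse : s = fun v => ∫ k in (0:ℝ)..v, σ k := funext hs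
    rw [hse]
    exact intervalIntegral.integral_hasDerivAt_right (hσ.intervalIntegrable 0 v)
      (hσ.stronglyMeasurableAtFilter _ _) hσ.continuousAt
  -- ∂_v ω
  set D1 : ℝ → ℝ → ℝ := fun u v =>
    -(b u * σ v) * α u * ρ v + (1 - b u * s v) * α u * deriv ρ v with hD1
  -- ∂_u ω
  set D2 : ℝ → ℝ → ℝ := fun u v =>
    (-(β u * s v) * α u + (1 - b u * s v) * deriv α u) * ρ v with hD2
  -- ∂_u ∂_v ω
  set D12 : ℝ → ℝ → ℝ := fun u v =>
    (-(β u * σ v) * α u + -(b u * σ v) * deriv α u) * ρ v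
      + (-(β u * s v) * α u + (1 - b u * s v) * deriv α u) * deriv ρ v with hD12
  have hWv : ∀ u v, HasDerivAt (fun v' => ω u v') (D1 u v) v := by
    intro u v
    have h1 : HasDerivAt (fun v' => 1 - b u * s v') (-(b u * σ v)) v := by
      simpa using (((hsd v).const_mul (b u)).const_sub 1)
    have h2 := (h1.mul_const (α u)).mul (hρd v)
    simp only [hω]
    exact h2
  have hWu : ∀ u v, HasDerivAt (fun u' => ω u' v) (D2 u v) u := by
    intro u v
    have h1 : HasDerivAt (fun u' => 1 - b u' * s v) (-(β u * s v)) u := by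
      simpa using (((hbd u).mul_const (s v)).const_sub 1)
    have h2 := (h1.mul (hαd u)).mul_const (ρ v)
    simp only [hω]
    exact h2
  have hWuv : ∀ u v, HasDerivAt (fun u' => D1 u' v) (D12 u v) u := by
    intro u v
    have h1 : HasDerivAt (fun u' => -(b u' * σ v)) (-(β u * σ v)) u := by
      exact ((hbd u).mul_const (σ v)).neg
    have h2 : HasDerivAt (fun u' => 1 - b u' * s v) (-(β u * s v)) u := by
      simpa using (((hbd u).mul_const (s v)).const_sub 1)
    have h3 := ((h1.mul (hαd u)).mul_const (ρ v)).add
      (((h2.mul (hαd u)).mul_const (deriv ρ v)))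
    simp only [hD1]
    exact h3
  -- the main algebraic identity
  have key : ∀ u v, ω u v * D12 u v - D2 u v * D1 u v + A u * B v = 0 := by
    intro u v
    simp only [hω, hA, hB, hD1, hD2, hD12]
    ring
  have hderiv1 : ∀ u v,
      deriv (fun u' => deriv (fun v' => ω u' v') v) u = D12 u v := by
    intro u v
    have : (fun u' => deriv (fun v' => ω u' v') v) = fun u' => D1 u' v :=
      funext fun u' => (hWv u' v).deriv
    rw [this]
    exact (hWuv u v).deriv
  constructor
  · intro u v
    rw [hderiv1 u v, (hWu u v).deriv, (hWv u v).deriv]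
    exact key u v
  · intro u v hpos
    have hne : ω u v ≠ 0 := ne_of_gt hpos
    -- ω(·,v) continuous
    have hdiffb : Differentiable ℝ b := fun u => (hbd u).differentiableAt
    have hbc : Continuous b := hdiffb.continuous
    have hce : (fun u' => ω u' v) = fun u' => (1 - b u' * s v) * α u' * ρ v :=
      funext fun u' => hω u' v
    have hcontu : Continuous (fun u' => ω u' v) := by
      rw [hce]
      exact ((continuous_const.sub (hbc.mul continuous_const)).mul hα.continuous).mul
        continuous_const
    have hne' : ∀ᶠ u' in nhds u, ω u' v ≠ 0 := hcontu.continuousAt.eventually_ne hne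
    have hlog : (fun u' => deriv (fun v' => Real.log (ω u' v')) v)
        =ᶠ[nhds u] fun u' => D1 u' v / ω u' v :=
      hne'.mono fun u' h => ((hWv u' v).log h).deriv
    have hdiv : HasDerivAt (fun u' => D1 u' v / ω u' v)
        ((D12 u v * ω u v - D1 u v * D2 u v) / (ω u v) ^ 2) u :=
      (hWuv u v).div (hWu u v) hne
    rw [hlog.deriv_eq, hdiv.deriv, ← add_div, div_eq_zero_iff]
    left
    linarith [key u v]
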